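/- With m > 1, for every x ∈ ℝᵐ one has Ĩ_T(x) ≤ Î_T(x), where Î_T(x) = inf{ Q̃_T(g) : g ∈ (H₀¹)ᵐ, g(T) = x } and Ĩ_T(x) = (1/2) inf{ ‖y‖² + ∫₀ᵀ ‖ḟ(t)‖² dt : y ∈ ℝᵐ, f ∈ (H₀¹)ᵐ, Ψ(y,f) = x } (both equal to ∞ when the respective constraints are unsatisfiable). -/

import Mathlib

open MeasureTheory
open scoped ENNReal

/-- The Euclidean operator norm of an `m×m` real matrix. -/
noncomputable def matOpNorm {m : ℕ} (A : Matrix (Fin m) (Fin m) ℝ) : ℝ :=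
  sSup {r : ℝ | ∃ v : Fin m → ℝ, (∑ i, (v i) ^ 2) = 1 ∧
    r = Real.sqrt (∑ i, (A.mulVec v i) ^ 2)}

/-- Membership in the `m`-dimensional Cameron–Martin space `(H₀¹)ᵐ` on `[0,T]`. -/
def IsCMv (T : ℝ) (m : ℕ) (f f' : ℝ → Fin m → ℝ) : Prop :=
  f 0 = 0 ∧ (∀ t ∈ Set.Icc (0:ℝ) T, f t = ∫ s in (0:ℝ)..t, f' s) ∧
  IntervalIntegrable f' volume 0 T ∧
  IntervalIntegrable (fun s => ∑ i, (f' s i) ^ 2) volume 0 T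

/-- The multidimensional path functional `Φ(l,f)(t)`. -/
noncomputable def PhiM (d m : ℕ) (b : ℝ → (Fin d → ℝ) → Fin m → ℝ)
    (σ : ℝ → (Fin d → ℝ) → Matrix (Fin m) (Fin m) ℝ)
    (C Cbar : Matrix (Fin m) (Fin m) ℝ)
    (hat : (ℝ → Fin m → ℝ) → ℝ → Fin d → ℝ)
    (l' f f' : ℝ → Fin m → ℝ) (t : ℝ) : Fin m → ℝ :=
  (∫ s in (0:ℝ)..t, b s (hat f s)) +
    (∫ s in (0:ℝ)..t, (σ s (hat f s) * Cbar).mulVec (l' s)) +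
    (∫ s in (0:ℝ)..t, (σ s (hat f s) * C).mulVec (f' s))

/-- The multidimensional sample-path rate function `Q̃_T(g)` (value `∞` when the
equation `Φ(l,f) = g` has no solution). -/
noncomputable def QTM (T : ℝ) (d m : ℕ) (b : ℝ → (Fin d → ℝ) → Fin m → ℝ)
    (σ : ℝ → (Fin d → ℝ) → Matrix (Fin m) (Fin m) ℝ)
    (C Cbar : Matrix (Fin m) (Fin m) ℝ)
    (hat : (ℝ → Fin m → ℝ) → ℝ → Fin d → ℝ) (g : ℝ → Fin m → ℝ) : ℝ≥0∞ :=
  sInf {v : ℝ≥0∞ | ∃ l l' f f' : ℝ → Fin m → ℝ, IsCMv T m l l' ∧ IsCMv T m f f' ∧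
    (∀ t ∈ Set.Icc (0:ℝ) T, PhiM d m b σ C Cbar hat l' f f' t = g t) ∧
    v = ENNReal.ofReal ((1 / 2) *
      ((∫ t in (0:ℝ)..T, ∑ i, (l' t i) ^ 2) + ∫ t in (0:ℝ)..T, ∑ i, (f' t i) ^ 2))}

/-- The multidimensional functional `Ψ(y,f)`. -/
noncomputable def PsiM (T : ℝ) (d m : ℕ) (b : ℝ → (Fin d → ℝ) → Fin m → ℝ)
    (σ : ℝ → (Fin d → ℝ) → Matrix (Fin m) (Fin m) ℝ)
    (C Cbar : Matrix (Fin m) (Fin m) ℝ)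
    (hat : (ℝ → Fin m → ℝ) → ℝ → Fin d → ℝ)
    (y : Fin m → ℝ) (f f' : ℝ → Fin m → ℝ) : Fin m → ℝ :=
  (∫ s in (0:ℝ)..T, b s (hat f s)) +
    (∫ s in (0:ℝ)..T, (σ s (hat f s) * C).mulVec (f' s)) +
    Real.sqrt (∫ s in (0:ℝ)..T, (matOpNorm (σ s (hat f s) * Cbar)) ^ 2) • y

noncomputable def eucCLM {m : ℕ} (A : Matrix (Fin m) (Fin m) ℝ) :
    EuclideanSpace ℝ (Fin m) →L[ℝ] EuclideanSpace ℝ (Fin m) :=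
  LinearMap.toContinuousLinearMap (Matrix.toEuclideanLin A)

lemma eucCLM_apply {m : ℕ} (A : Matrix (Fin m) (Fin m) ℝ) (v : Fin m → ℝ) :
    eucCLM A ((WithLp.equiv 2 (Fin m → ℝ)).symm v)
      = (WithLp.equiv 2 (Fin m → ℝ)).symm (A.mulVec v) := rfl

lemma norm_iota {m : ℕ} (v : Fin m → ℝ) :
    ‖((WithLp.equiv 2 (Fin m → ℝ)).symm v : EuclideanSpace ℝ (Fin m))‖
      = Real.sqrt (∑ i, (v i) ^ 2) := by
  simp [EuclideanSpace.norm_eq, sq_abs]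

lemma matOpNorm_eq {m : ℕ} (hm : 0 < m) (A : Matrix (Fin m) (Fin m) ℝ) :
    matOpNorm A = ‖eucCLM A‖ := by
  set S := {r : ℝ | ∃ v : Fin m → ℝ, (∑ i, (v i) ^ 2) = 1 ∧
    r = Real.sqrt (∑ i, (A.mulVec v i) ^ 2)} with hS
  have hub : ∀ r ∈ S, r ≤ ‖eucCLM A‖ := by
    rintro r ⟨v, hv, rfl⟩
    have h1 : ‖((WithLp.equiv 2 (Fin m → ℝ)).symm v : EuclideanSpace ℝ (Fin m))‖ = 1 := by
      rw [norm_iota, hv, Real.sqrt_one]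
    calc Real.sqrt (∑ i, (A.mulVec v i) ^ 2)
        = ‖eucCLM A ((WithLp.equiv 2 (Fin m → ℝ)).symm v)‖ := by
          rw [eucCLM_apply, norm_iota]
      _ ≤ ‖eucCLM A‖ * ‖((WithLp.equiv 2 (Fin m → ℝ)).symm v : EuclideanSpace ℝ (Fin m))‖ :=
          (eucCLM A).le_opNorm _
      _ = ‖eucCLM A‖ := by rw [h1, mul_one]
  have hbdd : BddAbove S := ⟨‖eucCLM A‖, hub⟩
  have hne : ∃ r, r ∈ S := by
    refine ⟨_, fun j => if j = ⟨0, hm⟩ then (1:ℝ) else 0, ?_, rfl⟩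
    simp [ite_pow]
  apply le_antisymm
  · exact Real.sSup_le hub (norm_nonneg _)
  · obtain ⟨r0, hr0⟩ := hne
    have hr0' : 0 ≤ r0 := by
      obtain ⟨v, hv, rfl⟩ := hr0; exact Real.sqrt_nonneg _
    have hSup0 : 0 ≤ sSup S := le_trans hr0' (le_csSup hbdd hr0)
    apply ContinuousLinearMap.opNorm_le_bound _ hSup0
    intro x
    rcases eq_or_ne x 0 with rfl | hx
    · simp
    · have hxn : ‖x‖ ≠ 0 := norm_ne_zero_iff.mpr hx
      set v : Fin m → ℝ := WithLp.equiv 2 (Fin m → ℝ) x with hvdef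
      have hxv : x = (WithLp.equiv 2 (Fin m → ℝ)).symm v := by simp [hvdef]
      have hnv : Real.sqrt (∑ i, (v i)^2) = ‖x‖ := by rw [hxv, norm_iota]
      set u : Fin m → ℝ := ‖x‖⁻¹ • v with hu
      have hu1 : (∑ i, (u i) ^ 2) = 1 := by
        have hsum : (∑ i, (v i)^2) = ‖x‖^2 := by
          rw [← hnv]; rw [Real.sq_sqrt (by positivity)]
        simp only [hu, Pi.smul_apply, smul_eq_mul, mul_pow, ← Finset.mul_sum, hsum]
        field_simp
      have hmem : Real.sqrt (∑ i, (A.mulVec u i) ^ 2) ∈ S := ⟨u, hu1, rfl⟩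
      have key : ‖eucCLM A x‖ = ‖x‖ * Real.sqrt (∑ i, (A.mulVec u i) ^ 2) := by
        have hvu : v = ‖x‖ • u := by
          rw [hu, smul_smul, mul_inv_cancel₀ hxn, one_smul]
        have hmv : A.mulVec v = ‖x‖ • A.mulVec u := by rw [hvu, Matrix.mulVec_smul]
        have h1 : eucCLM A x = (WithLp.equiv 2 (Fin m → ℝ)).symm (A.mulVec v) := by
          conv_lhs => rw [hxv, eucCLM_apply]
        rw [h1, norm_iota, hmv]
        have : ∀ i, ((‖x‖ • A.mulVec u) i)^2 = ‖x‖^2 * (A.mulVec u i)^2 := by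
          intro i; simp [mul_pow]
        rw [Finset.sum_congr rfl (fun i _ => this i), ← Finset.mul_sum,
          Real.sqrt_mul (by positivity), Real.sqrt_sq (norm_nonneg _)]
      rw [key, mul_comm]
      exact mul_le_mul_of_nonneg_right (le_csSup hbdd hmem) (norm_nonneg _)

lemma matOpNorm_nonneg {m : ℕ} (hm : 0 < m) (A : Matrix (Fin m) (Fin m) ℝ) :
    0 ≤ matOpNorm A := by rw [matOpNorm_eq hm]; exact norm_nonneg _

lemma sqrt_sum_mulVec_le {m : ℕ} (hm : 0 < m) (A : Matrix (Fin m) (Fin m) ℝ) (v : Fin m → ℝ) :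
    Real.sqrt (∑ i, (A.mulVec v i) ^ 2) ≤ matOpNorm A * Real.sqrt (∑ i, (v i) ^ 2) := by
  rw [matOpNorm_eq hm]
  calc Real.sqrt (∑ i, (A.mulVec v i) ^ 2)
      = ‖eucCLM A ((WithLp.equiv 2 (Fin m → ℝ)).symm v)‖ := by rw [eucCLM_apply, norm_iota]
    _ ≤ ‖eucCLM A‖ * ‖((WithLp.equiv 2 (Fin m → ℝ)).symm v : EuclideanSpace ℝ (Fin m))‖ :=
        (eucCLM A).le_opNorm _
    _ = ‖eucCLM A‖ * Real.sqrt (∑ i, (v i) ^ 2) := by rw [norm_iota]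

lemma matOpNorm_continuous {m : ℕ} (hm : 0 < m) :
    Continuous (matOpNorm (m := m)) := by
  have hlin : Continuous (fun A : Matrix (Fin m) (Fin m) ℝ => eucCLM A) := by
    exact LinearMap.continuous_of_finiteDimensional
      ((LinearMap.toContinuousLinearMap :
        (EuclideanSpace ℝ (Fin m) →ₗ[ℝ] EuclideanSpace ℝ (Fin m)) ≃ₗ[ℝ]
          (EuclideanSpace ℝ (Fin m) →L[ℝ] EuclideanSpace ℝ (Fin m))).toLinearMap.comp
        (Matrix.toEuclideanLin.toLinearMap))
  have : Continuous (fun A : Matrix (Fin m) (Fin m) ℝ => ‖eucCLM A‖) :=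
    continuous_norm.comp hlin
  convert this using 1
  funext A; exact matOpNorm_eq hm A

lemma integral_cauchy_schwarz {T : ℝ} (hT : 0 ≤ T) {p q : ℝ → ℝ}
    (hppos : ∀ s ∈ Set.Icc (0:ℝ) T, 0 ≤ p s) (hqpos : ∀ s ∈ Set.Icc (0:ℝ) T, 0 ≤ q s)
    (hp2 : IntervalIntegrable (fun s => p s ^ 2) volume 0 T)
    (hq2 : IntervalIntegrable (fun s => q s ^ 2) volume 0 T)
    (hpq : IntervalIntegrable (fun s => p s * q s) volume 0 T) :
    (∫ s in (0:ℝ)..T, p s * q s)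
      ≤ Real.sqrt (∫ s in (0:ℝ)..T, p s ^ 2) * Real.sqrt (∫ s in (0:ℝ)..T, q s ^ 2) := by
  set P := ∫ s in (0:ℝ)..T, p s ^ 2 with hP
  set Q := ∫ s in (0:ℝ)..T, q s ^ 2 with hQ
  set S := ∫ s in (0:ℝ)..T, p s * q s with hSdef
  have hS0 : 0 ≤ S := intervalIntegral.integral_nonneg hT (fun u hu => mul_nonneg (hppos u hu) (hqpos u hu))
  have hP0 : 0 ≤ P := intervalIntegral.integral_nonneg hT (fun u _ => sq_nonneg _)
  have hQ0 : 0 ≤ Q := intervalIntegral.integral_nonneg hT (fun u _ => sq_nonneg _)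
  have key : ∀ t : ℝ, 0 ≤ t ^ 2 * P - 2 * t * S + Q := by
    intro t
    have h1 : 0 ≤ ∫ s in (0:ℝ)..T, (t * p s - q s) ^ 2 :=
      intervalIntegral.integral_nonneg hT (fun u _ => sq_nonneg _)
    have h2 : (∫ s in (0:ℝ)..T, (t * p s - q s) ^ 2)
        = t ^ 2 * P - 2 * t * S + Q := by
      have expand : (fun s => (t * p s - q s) ^ 2)
          = fun s => (t ^ 2 * p s ^ 2 - 2 * t * (p s * q s)) + q s ^ 2 := by
        funext s; ring
      rw [expand, intervalIntegral.integral_add ((hp2.const_mul _).sub (hpq.const_mul _)) hq2,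
        intervalIntegral.integral_sub (hp2.const_mul _) (hpq.const_mul _),
        intervalIntegral.integral_const_mul, intervalIntegral.integral_const_mul]
    linarith [h1, h2.symm.le, h2.le]
  rcases eq_or_lt_of_le hP0 with hPz | hPpos
  · -- P = 0 : then S = 0
    have hSz : S ≤ 0 := by
      by_contra h
      push_neg at h
      have hk := key ((Q + 1) / (2 * S))
      rw [← hPz] at hk
      have h2S : (2 * S) ≠ 0 := by positivity
      have h3 : 2 * ((Q + 1) / (2 * S)) * S = Q + 1 := by field_simp
      nlinarith [hk, h3]
    have : S = 0 := le_antisymm hSz hS0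
    rw [this]
    positivity
  · have := key (S / P)
    have hS2 : S ^ 2 ≤ P * Q := by
      have hPne : P ≠ 0 := ne_of_gt hPpos
      have h3 : (S / P) ^ 2 * P = S ^ 2 / P := by field_simp
      have h4 : 2 * (S / P) * S = 2 * (S ^ 2 / P) := by ring
      have h5 : 0 ≤ Q - S ^ 2 / P := by
        have := this; rw [h3, h4] at this; linarith
      have h6 : S ^ 2 / P ≤ Q := by linarith
      calc S ^ 2 = (S ^ 2 / P) * P := by field_simp
        _ ≤ Q * P := mul_le_mul_of_nonneg_right h6 hP0
        _ = P * Q := mul_comm _ _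
    calc S = Real.sqrt (S ^ 2) := (Real.sqrt_sq hS0).symm
      _ ≤ Real.sqrt (P * Q) := Real.sqrt_le_sqrt hS2
      _ = Real.sqrt P * Real.sqrt Q := Real.sqrt_mul hP0 _


lemma sqrt_le_one_add {u : ℝ} (hu : 0 ≤ u) : Real.sqrt u ≤ 1 + u := by
  calc Real.sqrt u ≤ Real.sqrt ((1 + u) ^ 2) := Real.sqrt_le_sqrt (by nlinarith)
    _ = 1 + u := Real.sqrt_sq (by linarith)

/-- for `m > 1`, `Ĩ_T(x) ≤ Î_T(x)` for every `x ∈ ℝᵐ`, where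
`Î_T(x) = inf { Q̃_T(g) : g ∈ (H₀¹)ᵐ, g(T) = x }` and
`Ĩ_T(x) = (1/2) inf { ‖y‖² + ∫₀ᵀ ‖f'‖² : y ∈ ℝᵐ, f ∈ (H₀¹)ᵐ, Ψ(y,f) = x }`. -/
theorem rate_function_le_multidim (T : ℝ) (hT : 0 < T) (d m : ℕ) (hm : 1 < m)
    (b : ℝ → (Fin d → ℝ) → Fin m → ℝ)
    (σ : ℝ → (Fin d → ℝ) → Matrix (Fin m) (Fin m) ℝ)
    (hb : ContinuousOn (fun p : ℝ × (Fin d → ℝ) => b p.1 p.2)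
      (Set.Icc (0:ℝ) T ×ˢ Set.univ))
    (hσ : ContinuousOn (fun p : ℝ × (Fin d → ℝ) => σ p.1 p.2)
      (Set.Icc (0:ℝ) T ×ˢ Set.univ))
    (C Cbar : Matrix (Fin m) (Fin m) ℝ)
    (hCbarSymm : Cbar.IsSymm) (hCbarPos : Cbar.PosDef)
    (hat : (ℝ → Fin m → ℝ) → ℝ → Fin d → ℝ)
    (hhat : ∀ f : ℝ → Fin m → ℝ, ContinuousOn (hat f) (Set.Icc (0:ℝ) T))
    (x : Fin m → ℝ) :
    sInf {v : ℝ≥0∞ | ∃ y : Fin m → ℝ, ∃ f f' : ℝ → Fin m → ℝ, IsCMv T m f f' ∧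
        PsiM T d m b σ C Cbar hat y f f' = x ∧
        v = ENNReal.ofReal ((1 / 2) *
          ((∑ i, (y i) ^ 2) + ∫ t in (0:ℝ)..T, ∑ i, (f' t i) ^ 2))}
      ≤ sInf {v : ℝ≥0∞ | ∃ g g' : ℝ → Fin m → ℝ, IsCMv T m g g' ∧ g T = x ∧
        v = QTM T d m b σ C Cbar hat g} := by
  classical
  refine le_sInf ?_
  rintro v ⟨g, g', hg, hgT, rfl⟩
  simp only [QTM]
  refine le_sInf ?_
  rintro v ⟨l, l', f, f', hl, hf, hPhi, rfl⟩
  have hm0 : 0 < m := lt_trans Nat.zero_lt_one hm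
  have hIcc : Set.uIcc (0:ℝ) T = Set.Icc 0 T := Set.uIcc_of_le hT.le
  have hIoc : Set.uIoc (0:ℝ) T = Set.Ioc 0 T := Set.uIoc_of_le hT.le
  -- continuity of the matrix path
  have hσf : ContinuousOn (fun s => σ s (hat f s)) (Set.Icc (0:ℝ) T) := by
    have h1 : ContinuousOn (fun s : ℝ => (s, hat f s)) (Set.Icc (0:ℝ) T) :=
      (continuousOn_id.prodMk (hhat f))
    exact hσ.comp h1 (fun s hs => ⟨hs, trivial⟩)
  have hAc : ContinuousOn (fun s => σ s (hat f s) * Cbar) (Set.Icc (0:ℝ) T) :=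
    hσf.mul continuousOn_const
  have hOpc : ContinuousOn (fun s => matOpNorm (σ s (hat f s) * Cbar)) (Set.Icc (0:ℝ) T) :=
    (matOpNorm_continuous hm0).comp_continuousOn hAc
  have hOp2c : ContinuousOn (fun s => matOpNorm (σ s (hat f s) * Cbar) ^ 2)
      (Set.Icc (0:ℝ) T) := hOpc.pow 2
  have huIccsub : Set.uIcc (0:ℝ) T ⊆ Set.Icc (0:ℝ) T := by rw [hIcc]
  have hKint : IntervalIntegrable (fun s => matOpNorm (σ s (hat f s) * Cbar) ^ 2)
      volume 0 T := (hOp2c.mono huIccsub).intervalIntegrable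
  set K := ∫ s in (0:ℝ)..T, matOpNorm (σ s (hat f s) * Cbar) ^ 2 with hKdef
  have hK0 : 0 ≤ K := intervalIntegral.integral_nonneg hT.le (fun u _ => sq_nonneg _)
  set L := ∫ t in (0:ℝ)..T, ∑ i, (l' t i) ^ 2 with hLdef
  have hL0 : 0 ≤ L := intervalIntegral.integral_nonneg hT.le
    (fun u _ => Finset.sum_nonneg fun i _ => sq_nonneg _)
  -- integrability of q = pointwise Euclidean norm of l'
  have hl2 : IntervalIntegrable (fun s => ∑ i, (l' s i) ^ 2) volume 0 T := hl.2.2.2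
  have hl1 : IntervalIntegrable l' volume 0 T := hl.2.2.1
  have hl2m : AEStronglyMeasurable (fun s => ∑ i, (l' s i) ^ 2)
      (volume.restrict (Set.uIoc (0:ℝ) T)) := hl2.def'.aestronglyMeasurable
  have hlm : AEStronglyMeasurable l' (volume.restrict (Set.uIoc (0:ℝ) T)) :=
    hl1.def'.aestronglyMeasurable
  have hqm : AEStronglyMeasurable (fun s => Real.sqrt (∑ i, (l' s i) ^ 2))
      (volume.restrict (Set.uIoc (0:ℝ) T)) :=
    Real.continuous_sqrt.comp_aestronglyMeasurable hl2m
  have hqint : IntervalIntegrable (fun s => Real.sqrt (∑ i, (l' s i) ^ 2)) volume 0 T := by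
    refine IntervalIntegrable.mono_fun' (g := fun s => 1 + ∑ i, (l' s i) ^ 2)
      (intervalIntegrable_const.add hl2) hqm ?_
    refine Filter.Eventually.of_forall (fun s => ?_)
    have hnn : (0:ℝ) ≤ ∑ i, (l' s i) ^ 2 := Finset.sum_nonneg fun i _ => sq_nonneg _
    show ‖Real.sqrt (∑ i, (l' s i) ^ 2)‖ ≤ 1 + ∑ i, (l' s i) ^ 2
    rw [Real.norm_eq_abs, abs_of_nonneg (Real.sqrt_nonneg _)]
    exact sqrt_le_one_add hnn
  -- the matrix-vector product path and its Euclidean version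
  set F : ℝ → Fin m → ℝ := fun s => (σ s (hat f s) * Cbar).mulVec (l' s) with hFdef
  set G : ℝ → EuclideanSpace ℝ (Fin m) :=
    fun s => (WithLp.equiv 2 (Fin m → ℝ)).symm (F s) with hGdef
  have hGnorm : ∀ s, ‖G s‖ = Real.sqrt (∑ i, (F s i) ^ 2) := fun s => norm_iota (F s)
  have hGb : ∀ s, ‖G s‖ ≤ matOpNorm (σ s (hat f s) * Cbar)
      * Real.sqrt (∑ i, (l' s i) ^ 2) := by
    intro s
    rw [hGnorm s]
    exact sqrt_sum_mulVec_le hm0 _ _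
  -- integrability of the dominating function
  have hod : IntervalIntegrable
      (fun s => matOpNorm (σ s (hat f s) * Cbar) * Real.sqrt (∑ i, (l' s i) ^ 2))
      volume 0 T := hqint.continuousOn_mul (hOpc.mono huIccsub)
  -- measurability of F and G
  have hFm : AEStronglyMeasurable F (volume.restrict (Set.uIoc (0:ℝ) T)) := by
    have hterm : ∀ j : Fin m, AEStronglyMeasurable
        (fun s => l' s j • (fun i => (σ s (hat f s) * Cbar) i j))
        (volume.restrict (Set.uIoc (0:ℝ) T)) := by
      intro j
      have h1 : AEStronglyMeasurable (fun s => l' s j)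
          (volume.restrict (Set.uIoc (0:ℝ) T)) :=
        (continuous_apply j).comp_aestronglyMeasurable hlm
      have h2 : ContinuousOn (fun s => (fun i => (σ s (hat f s) * Cbar) i j))
          (Set.Icc (0:ℝ) T) := by
        have hc : Continuous (fun M : Matrix (Fin m) (Fin m) ℝ => (fun i => M i j)) :=
          continuous_pi fun i => (continuous_apply j).comp (continuous_apply i)
        exact hc.comp_continuousOn hAc
      have h3 : AEStronglyMeasurable (fun s => (fun i => (σ s (hat f s) * Cbar) i j))
          (volume.restrict (Set.uIoc (0:ℝ) T)) :=
        (h2.aestronglyMeasurable measurableSet_Icc).mono_measure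
          (Measure.restrict_mono (by rw [hIoc]; exact Set.Ioc_subset_Icc_self) le_rfl)
      exact h1.smul h3
    have hsum := Finset.aestronglyMeasurable_sum (μ := volume.restrict (Set.uIoc (0:ℝ) T))
      Finset.univ (fun j _ => hterm j)
    refine hsum.congr (Filter.Eventually.of_forall fun s => ?_)
    rw [Finset.sum_apply]
    funext i
    simp only [Finset.sum_apply, Pi.smul_apply, smul_eq_mul]
    simp [hFdef, Matrix.mulVec, dotProduct, mul_comm]
  have hGm : AEStronglyMeasurable G (volume.restrict (Set.uIoc (0:ℝ) T)) := by
    have hcont : Continuous ((WithLp.equiv 2 (Fin m → ℝ)).symm :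
        (Fin m → ℝ) → EuclideanSpace ℝ (Fin m)) := PiLp.continuous_toLp _ _
    exact hcont.comp_aestronglyMeasurable hFm
  have hGint : IntervalIntegrable G volume 0 T := by
    refine IntervalIntegrable.mono_fun hod hGm ?_
    refine Filter.Eventually.of_forall (fun s => ?_)
    refine le_trans (hGb s) (le_abs_self _)
  -- the key norm inequality
  have step1 : ‖∫ s in (0:ℝ)..T, G s‖ ≤ ∫ s in (0:ℝ)..T, ‖G s‖ :=
    intervalIntegral.norm_integral_le_integral_norm hT.le
  have step2 : (∫ s in (0:ℝ)..T, ‖G s‖) ≤ ∫ s in (0:ℝ)..T,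
      matOpNorm (σ s (hat f s) * Cbar) * Real.sqrt (∑ i, (l' s i) ^ 2) :=
    intervalIntegral.integral_mono_on hT.le hGint.norm hod (fun s _ => hGb s)
  have hq2eq : (fun s => Real.sqrt (∑ i, (l' s i) ^ 2) ^ 2)
      = fun s => ∑ i, (l' s i) ^ 2 := by
    funext s
    exact Real.sq_sqrt (Finset.sum_nonneg fun i _ => sq_nonneg _)
  have step3 : (∫ s in (0:ℝ)..T,
        matOpNorm (σ s (hat f s) * Cbar) * Real.sqrt (∑ i, (l' s i) ^ 2))
      ≤ Real.sqrt K * Real.sqrt L := by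
    have := integral_cauchy_schwarz hT.le
      (p := fun s => matOpNorm (σ s (hat f s) * Cbar))
      (q := fun s => Real.sqrt (∑ i, (l' s i) ^ 2))
      (fun s hs => matOpNorm_nonneg hm0 _)
      (fun s hs => Real.sqrt_nonneg _)
      hKint (by rw [hq2eq]; exact hl2) hod
    rw [hq2eq] at this
    exact this
  have hwE : ‖∫ s in (0:ℝ)..T, G s‖ ≤ Real.sqrt K * Real.sqrt L :=
    le_trans step1 (le_trans step2 step3)
  -- identify coordinates
  set w : Fin m → ℝ := ∫ s in (0:ℝ)..T, F s with hwdef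
  have hFG : ∀ s, F s = (EuclideanSpace.equiv (Fin m) ℝ).toContinuousLinearMap (G s) :=
    fun s => rfl
  have hcomm : w = (EuclideanSpace.equiv (Fin m) ℝ).toContinuousLinearMap
      (∫ s in (0:ℝ)..T, G s) := by
    rw [← ContinuousLinearMap.intervalIntegral_comp_comm _ hGint]
    exact intervalIntegral.integral_congr (fun s _ => hFG s)
  have hwsum : ∑ i, (w i) ^ 2 ≤ K * L := by
    have hwi : Real.sqrt (∑ i, (w i) ^ 2) = ‖∫ s in (0:ℝ)..T, G s‖ := by
      rw [hcomm, EuclideanSpace.norm_eq]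
      congr 1
      refine Finset.sum_congr rfl fun i _ => ?_
      rw [Real.norm_eq_abs, sq_abs]
      rfl
    have h1 : Real.sqrt (∑ i, (w i) ^ 2) ≤ Real.sqrt K * Real.sqrt L := by
      rw [hwi]; exact hwE
    have h2 : ∑ i, (w i) ^ 2 = Real.sqrt (∑ i, (w i) ^ 2) ^ 2 :=
      (Real.sq_sqrt (Finset.sum_nonneg fun i _ => sq_nonneg _)).symm
    rw [h2]
    calc Real.sqrt (∑ i, (w i) ^ 2) ^ 2 ≤ (Real.sqrt K * Real.sqrt L) ^ 2 := by
          apply pow_le_pow_left₀ (Real.sqrt_nonneg _) h1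
      _ = K * L := by
          rw [mul_pow, Real.sq_sqrt hK0, Real.sq_sqrt hL0]
  -- define the witness y
  set y : Fin m → ℝ := if Real.sqrt K = 0 then 0 else (Real.sqrt K)⁻¹ • w with hydef
  have hyeq : Real.sqrt K • y = w := by
    by_cases hz : Real.sqrt K = 0
    · -- degenerate case : w = 0
      have hKz : K = 0 := le_antisymm (Real.sqrt_eq_zero'.mp hz) hK0
      have hOpz : ∀ s ∈ Set.Icc (0:ℝ) T, matOpNorm (σ s (hat f s) * Cbar) = 0 := by
        intro s hs
        by_contra hne
        have hpos : 0 < matOpNorm (σ s (hat f s) * Cbar) ^ 2 := by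
          have := lt_of_le_of_ne (matOpNorm_nonneg hm0 (σ s (hat f s) * Cbar)) (Ne.symm hne)
          positivity
        have : 0 < K := intervalIntegral.integral_pos hT hOp2c
          (fun u _ => sq_nonneg _) ⟨s, hs, hpos⟩
        linarith
      have hFz : Set.EqOn F 0 (Set.uIcc (0:ℝ) T) := by
        intro s hs
        rw [hIcc] at hs
        have h1 : ‖G s‖ ≤ 0 := by
          have := hGb s
          rw [hOpz s hs, zero_mul] at this
          exact this
        have h2 : G s = 0 := norm_le_zero_iff.mp h1
        have h3 := congrArg WithLp.ofLp h2
        simpa [hGdef] using h3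
      have hwz : w = 0 := by
        rw [hwdef, intervalIntegral.integral_congr hFz]
        simp
      rw [hz, hwz, zero_smul]
    · rw [hydef, if_neg hz, smul_smul, mul_inv_cancel₀ hz, one_smul]
  have hy2 : ∑ i, (y i) ^ 2 ≤ L := by
    by_cases hz : Real.sqrt K = 0
    · rw [hydef, if_pos hz]
      simpa using hL0
    · have hKpos : 0 < K := by
        rcases lt_or_eq_of_le hK0 with h | h
        · exact h
        · exfalso; apply hz; rw [← h, Real.sqrt_zero]
      rw [hydef, if_neg hz]
      have : ∑ i, (((Real.sqrt K)⁻¹ • w) i) ^ 2 = K⁻¹ * ∑ i, (w i) ^ 2 := by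
        simp only [Pi.smul_apply, smul_eq_mul, mul_pow, ← Finset.mul_sum]
        congr 1
        rw [← Real.sq_sqrt hK0, ← inv_pow]
        ring_nf
        rw [Real.sq_sqrt hK0]
      rw [this]
      calc K⁻¹ * ∑ i, (w i) ^ 2 ≤ K⁻¹ * (K * L) :=
            mul_le_mul_of_nonneg_left hwsum (by positivity)
        _ = L := by field_simp
  -- the constraint Ψ(y, f) = x
  have hPsi : PsiM T d m b σ C Cbar hat y f f' = x := by
    have hphiT := hPhi T ⟨hT.le, le_rfl⟩
    rw [hgT] at hphiT
    rw [PhiM] at hphiT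
    have hw2 : (∫ s in (0:ℝ)..T, (σ s (hat f s) * Cbar).mulVec (l' s)) = w :=
      intervalIntegral.integral_congr fun s _ => (congrFun hFdef s).symm
    rw [PsiM, ← hKdef, hyeq, ← hw2, ← hphiT]
    exact add_right_comm _ _ _
  refine le_trans (sInf_le ⟨y, f, f', hf, hPsi, rfl⟩) (ENNReal.ofReal_le_ofReal ?_)
  have := hy2
  nlinarith [hy2, intervalIntegral.integral_nonneg (μ := volume) hT.le
    (fun u _ => Finset.sum_nonneg (fun i _ => sq_nonneg (f' u i)) : ∀ u ∈ Set.Icc (0:ℝ) T, 0 ≤ ∑ i, (f' u i)^2)]
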